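/- arXiv:1002.2163 — 3 statements merged into one kernel-verified Lean document; each statement's English description precedes it below -/
import Mathlib

section
/- For the M/M/∞ queue with birth rates b_k = λ and death rates a_k = k, invariant measure μ = Poisson(λ), and g₀(n) = n − λ: for every κ > 0, U(n) = κⁿ satisfies (ℒ + ((κ−1)/κ)g₀)U = ((κ−1)²/κ)λ·U, where ℒf(n) = λ(f(n+1)−f(n)) + n(f(n−1)−f(n)). Consequently the cumulant Λ(sg₀) equals λs²/(1−s) for s < 1 and +∞ for s ≥ 1. -/
open MeasureTheory ProbabilityTheory Real

/-- The Schrödinger cumulant set for the M/M/∞ queue (`b_k = λ`, `a_k = k`,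
invariant measure `μ = Poisson(λ)`) and observable `g₀(n) = n - λ`:
`Λ(s g₀) = sup { ∫ s g₀ h² dμ - ℰ(h,h) : μ(h²) = 1 }` with Dirichlet form
`ℰ(h,h) = ∑ μ_n λ (h(n+1)-h(n))²`. -/
noncomputable def mmInfCumulantSet (lam : NNReal) (s : ℝ) : Set ℝ :=
  {v : ℝ | ∃ h : ℕ → ℝ,
    Summable (fun n => poissonPMFReal lam n * h n ^ 2) ∧
    (∑' n : ℕ, poissonPMFReal lam n * h n ^ 2) = 1 ∧
    Summable (fun n => poissonPMFReal lam n * ((n : ℝ) - (lam : ℝ)) * h n ^ 2) ∧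
    Summable (fun n => poissonPMFReal lam n * (lam : ℝ) * (h (n + 1) - h n) ^ 2) ∧
    v = s * (∑' n : ℕ, poissonPMFReal lam n * ((n : ℝ) - (lam : ℝ)) * h n ^ 2)
        - ∑' n : ℕ, poissonPMFReal lam n * (lam : ℝ) * (h (n + 1) - h n) ^ 2}

lemma pois_rec (lam : NNReal) (n : ℕ) :
    ((n : ℝ) + 1) * poissonPMFReal lam (n + 1) = (lam : ℝ) * poissonPMFReal lam n := by
  have h1 : ((n : ℝ) + 1) ≠ 0 := by positivity
  have h2 : ((n.factorial : ℕ) : ℝ) ≠ 0 := by exact_mod_cast (Nat.factorial_pos n).ne'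
  simp only [poissonPMFReal, Nat.factorial_succ, pow_succ]
  push_cast
  field_simp

lemma pois_hasSum_pow (lam : NNReal) (x : ℝ) :
    HasSum (fun n => poissonPMFReal lam n * x ^ n) (Real.exp ((lam : ℝ) * (x - 1))) := by
  have h1 : HasSum (fun n : ℕ => ((lam : ℝ) * x) ^ n / (n.factorial : ℝ)) (Real.exp ((lam : ℝ) * x)) := by
    rw [Real.exp_eq_exp_ℝ]; exact NormedSpace.expSeries_div_hasSum_exp _
  have h2 := h1.mul_left (Real.exp (-(lam : ℝ)))
  have e1 : (fun n : ℕ => Real.exp (-(lam : ℝ)) * (((lam : ℝ) * x) ^ n / (n.factorial : ℝ)))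
      = fun n => poissonPMFReal lam n * x ^ n := by
    funext n; simp only [poissonPMFReal, mul_pow]; ring
  have e2 : Real.exp (-(lam : ℝ)) * Real.exp ((lam : ℝ) * x)
      = Real.exp ((lam : ℝ) * (x - 1)) := by
    rw [← Real.exp_add]; ring_nf
  rw [e1, e2] at h2
  exact h2

lemma pois_hasSum_mul_pow (lam : NNReal) (x : ℝ) :
    HasSum (fun n : ℕ => (n : ℝ) * (poissonPMFReal lam n * x ^ n))
      ((lam : ℝ) * x * Real.exp ((lam : ℝ) * (x - 1))) := by
  set f : ℕ → ℝ := fun n => (n : ℝ) * (poissonPMFReal lam n * x ^ n) with hf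
  have hshift : HasSum (fun n => f (n + 1))
      ((lam : ℝ) * x * Real.exp ((lam : ℝ) * (x - 1))) := by
    have h := (pois_hasSum_pow lam x).mul_left ((lam : ℝ) * x)
    have e : (fun n : ℕ => (lam : ℝ) * x * (poissonPMFReal lam n * x ^ n))
        = fun n => f (n + 1) := by
      funext n
      simp only [hf]
      push_cast
      rw [pow_succ]
      linear_combination (-(x ^ n * x)) * pois_rec lam n
    rwa [e] at h
  have h := (hasSum_nat_add_iff 1).mp hshift
  simpa [hf] using h

lemma mem_cumulant (lam : NNReal) (s κ : ℝ) (hκ : 0 < κ) :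
    s * ((lam : ℝ) * κ ^ 2 - (lam : ℝ)) - (lam : ℝ) * (κ - 1) ^ 2 ∈ mmInfCumulantSet lam s := by
  set c : ℝ := Real.exp (-((lam : ℝ) * (κ ^ 2 - 1)) / 2) with hc
  have eqE : Real.exp ((lam : ℝ) * (κ ^ 2 - 1)) * (c * c) = 1 := by
    rw [hc, ← Real.exp_add, ← Real.exp_add]
    norm_num
  have epow : ∀ n : ℕ, (κ ^ 2) ^ n = (κ ^ n) ^ 2 := by
    intro n; rw [← pow_mul, ← pow_mul, mul_comm]
  -- H0
  have H0 : HasSum (fun n => poissonPMFReal lam n * (κ ^ n * c) ^ 2) 1 := by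
    have h := (pois_hasSum_pow lam (κ ^ 2)).mul_right (c * c)
    have e : (fun n : ℕ => poissonPMFReal lam n * (κ ^ 2) ^ n * (c * c))
        = fun n => poissonPMFReal lam n * (κ ^ n * c) ^ 2 := by
      funext n; rw [epow n]; ring
    rwa [e, eqE] at h
  -- H1
  have H1 : HasSum (fun n => poissonPMFReal lam n * ((n : ℝ) - (lam : ℝ)) * (κ ^ n * c) ^ 2)
      ((lam : ℝ) * (κ ^ 2 - 1)) := by
    have ha := (pois_hasSum_mul_pow lam (κ ^ 2)).mul_right (c * c)
    have hb := ((pois_hasSum_pow lam (κ ^ 2)).mul_right (c * c)).mul_left (lam : ℝ)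
    have h := ha.sub hb
    have e : (fun n : ℕ => (n : ℝ) * (poissonPMFReal lam n * (κ ^ 2) ^ n) * (c * c)
        - (lam : ℝ) * (poissonPMFReal lam n * (κ ^ 2) ^ n * (c * c)))
        = fun n => poissonPMFReal lam n * ((n : ℝ) - (lam : ℝ)) * (κ ^ n * c) ^ 2 := by
      funext n; rw [epow n]; ring
    have hval : (lam : ℝ) * κ ^ 2 * Real.exp ((lam : ℝ) * (κ ^ 2 - 1)) * (c * c)
        - (lam : ℝ) * (Real.exp ((lam : ℝ) * (κ ^ 2 - 1)) * (c * c))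
        = (lam : ℝ) * (κ ^ 2 - 1) := by
      linear_combination ((lam : ℝ) * κ ^ 2 - (lam : ℝ)) * eqE
    rwa [e, hval] at h
  -- H2
  have H2 : HasSum (fun n => poissonPMFReal lam n * (lam : ℝ)
      * (κ ^ (n + 1) * c - κ ^ n * c) ^ 2) ((lam : ℝ) * (κ - 1) ^ 2) := by
    have h := ((pois_hasSum_pow lam (κ ^ 2)).mul_right (c * c)).mul_left ((lam : ℝ) * (κ - 1) ^ 2)
    have e : (fun n : ℕ => (lam : ℝ) * (κ - 1) ^ 2 * (poissonPMFReal lam n * (κ ^ 2) ^ n * (c * c)))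
        = fun n => poissonPMFReal lam n * (lam : ℝ) * (κ ^ (n + 1) * c - κ ^ n * c) ^ 2 := by
      funext n; rw [epow n, pow_succ]; ring
    rwa [e, eqE, mul_one] at h
  refine ⟨fun n => κ ^ n * c, H0.summable, H0.tsum_eq, H1.summable, H2.summable, ?_⟩
  rw [H1.tsum_eq, H2.tsum_eq]
  ring


lemma cumulant_ub (lam : NNReal) (s : ℝ) (hs : s < 1) :
    ∀ v ∈ mmInfCumulantSet lam s, v ≤ (lam : ℝ) * s ^ 2 / (1 - s) := by
  rintro v ⟨h, S0, T0, S1, S2, hv⟩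
  have hlnn : (0 : ℝ) ≤ (lam : ℝ) := lam.2
  have h1s : (0 : ℝ) < 1 - s := by linarith
  set B : ℕ → ℝ := fun n =>
    s * (poissonPMFReal lam n * ((n : ℝ) - (lam : ℝ)) * h n ^ 2)
    + (s * (lam : ℝ)) * (poissonPMFReal lam n * h n ^ 2) with hB
  have SB : Summable B := (S1.mul_left s).add (S0.mul_left (s * (lam : ℝ)))
  have tsumB : ∑' n, B n
      = s * (∑' n : ℕ, poissonPMFReal lam n * ((n : ℝ) - (lam : ℝ)) * h n ^ 2)
        + s * (lam : ℝ) := by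
    rw [hB, Summable.tsum_add (S1.mul_left s) (S0.mul_left (s * (lam : ℝ))),
      tsum_mul_left, tsum_mul_left, T0, mul_one]
  set C : ℕ → ℝ := fun n => s * (lam : ℝ) * (poissonPMFReal lam n * h (n + 1) ^ 2) with hC
  have hBC : ∀ n, B (n + 1) = C n := by
    intro n
    have hrec := pois_rec lam n
    simp only [hB, hC]
    push_cast
    linear_combination (s * h (n + 1) ^ 2) * hrec
  have hB0 : B 0 = 0 := by
    simp only [hB, Nat.cast_zero]
    ring
  have SC : Summable C := ((summable_nat_add_iff 1).mpr SB).congr hBC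
  have tsumBC : ∑' n, B n = ∑' n, C n := by
    rw [Summable.tsum_eq_zero_add SB, hB0, zero_add]
    exact tsum_congr hBC
  set A : ℕ → ℝ := fun n =>
    (-((lam : ℝ) * s) / (1 - s)) * (poissonPMFReal lam n * h n ^ 2) with hA
  have SA : Summable A := S0.mul_left _
  have tsumA : ∑' n, A n = -((lam : ℝ) * s) / (1 - s) := by
    rw [hA, tsum_mul_left, T0, mul_one]
  have key : ∀ n, A n + C n ≤ poissonPMFReal lam n * (lam : ℝ) * (h (n + 1) - h n) ^ 2 := by
    intro n
    have hp : 0 ≤ poissonPMFReal lam n := poissonPMFReal_nonneg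
    set a := h n
    set b := h (n + 1)
    have base : (-(s / (1 - s))) * a ^ 2 + s * b ^ 2 ≤ (b - a) ^ 2 := by
      rw [← sub_nonneg]
      have e : (b - a) ^ 2 - ((-(s / (1 - s))) * a ^ 2 + s * b ^ 2)
          = (a - (1 - s) * b) ^ 2 / (1 - s) := by
        field_simp
        ring
      rw [e]
      positivity
    have e2 : A n + C n
        = (poissonPMFReal lam n * (lam : ℝ)) * ((-(s / (1 - s))) * a ^ 2 + s * b ^ 2) := by
      simp only [hA, hC]
      field_simp
      ring
    rw [e2]
    calc (poissonPMFReal lam n * (lam : ℝ)) * ((-(s / (1 - s))) * a ^ 2 + s * b ^ 2)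
        ≤ (poissonPMFReal lam n * (lam : ℝ)) * (b - a) ^ 2 :=
          mul_le_mul_of_nonneg_left base (mul_nonneg hp hlnn)
      _ = poissonPMFReal lam n * (lam : ℝ) * (b - a) ^ 2 := by ring
  have sumineq : ∑' n, (A n + C n)
      ≤ ∑' n : ℕ, poissonPMFReal lam n * (lam : ℝ) * (h (n + 1) - h n) ^ 2 :=
    Summable.tsum_le_tsum key (SA.add SC) S2
  rw [Summable.tsum_add SA SC, tsumA] at sumineq
  have e3 : ((lam : ℝ) * s) / (1 - s) - s * (lam : ℝ) = (lam : ℝ) * s ^ 2 / (1 - s) := by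
    field_simp
    ring
  have e4 : -((lam : ℝ) * s) / (1 - s) = -((lam : ℝ) * s / (1 - s)) := neg_div _ _
  linarith [tsumB, tsumBC, sumineq, hv.le, hv.ge]

/-- M/M/∞ queue: for every `κ > 0` the function `U(n) = κⁿ` is an
eigenfunction: `(ℒ + ((κ-1)/κ) g₀) U = ((κ-1)²/κ) λ U` where
`ℒf(n) = λ(f(n+1)-f(n)) + n(f(n-1)-f(n))`; consequently the cumulant
`Λ(s g₀)` equals `λ s²/(1-s)` for `s < 1` and `+∞` (the defining set is
unbounded above) for `s ≥ 1`. -/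
theorem mmInf_schrodinger_eigenfunction_and_cumulant
    (lam : NNReal) (hlam : 0 < lam) :
    (∀ κ : ℝ, 0 < κ → ∀ n : ℕ,
      ((lam : ℝ) * (κ ^ (n + 1) - κ ^ n) + (n : ℝ) * (κ ^ (n - 1) - κ ^ n))
          + ((κ - 1) / κ) * ((n : ℝ) - (lam : ℝ)) * κ ^ n
        = ((κ - 1) ^ 2 / κ) * (lam : ℝ) * κ ^ n) ∧
    (∀ s : ℝ, s < 1 →
      sSup (mmInfCumulantSet lam s) = (lam : ℝ) * s ^ 2 / (1 - s)) ∧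
    (∀ s : ℝ, 1 ≤ s → ¬ BddAbove (mmInfCumulantSet lam s)) := by
  refine ⟨?_, ?_, ?_⟩
  · intro κ hκ n
    have hκ0 : κ ≠ 0 := hκ.ne'
    rcases n with _ | m
    · norm_num
      field_simp
      ring
    · simp only [Nat.add_sub_cancel]
      push_cast
      field_simp
      ring
  · intro s hs
    have h1s : (0 : ℝ) < 1 - s := by linarith
    set κ : ℝ := 1 / (1 - s) with hκdef
    have hκ : 0 < κ := by positivity
    have hval : s * ((lam : ℝ) * κ ^ 2 - (lam : ℝ)) - (lam : ℝ) * (κ - 1) ^ 2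
        = (lam : ℝ) * s ^ 2 / (1 - s) := by
      rw [hκdef]
      field_simp
      ring
    have mem : (lam : ℝ) * s ^ 2 / (1 - s) ∈ mmInfCumulantSet lam s := by
      rw [← hval]
      exact mem_cumulant lam s κ hκ
    exact le_antisymm (csSup_le ⟨_, mem⟩ (cumulant_ub lam s hs))
      (le_csSup ⟨_, fun v hv => cumulant_ub lam s hs v hv⟩ mem)
  · intro s hs hbdd
    obtain ⟨M, hM⟩ := hbdd
    have hl : (0 : ℝ) < (lam : ℝ) := hlam
    set κ : ℝ := max 2 (M / (2 * (lam : ℝ)) + 2) with hκdef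
    have hκ2 : (2 : ℝ) ≤ κ := le_max_left _ _
    have hκ : (0 : ℝ) < κ := by linarith
    have hle := hM (mem_cumulant lam s κ hκ)
    have hMκ : M / (2 * (lam : ℝ)) + 2 ≤ κ := le_max_right _ _
    have h2l : (0 : ℝ) < 2 * (lam : ℝ) := by linarith
    have hM2 : M ≤ (κ - 2) * (2 * (lam : ℝ)) := (div_le_iff₀ h2l).mp (by linarith)
    have hge : 2 * (lam : ℝ) * (κ - 1)
        ≤ s * ((lam : ℝ) * κ ^ 2 - (lam : ℝ)) - (lam : ℝ) * (κ - 1) ^ 2 := by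
      nlinarith [mul_nonneg (by linarith : (0 : ℝ) ≤ s - 1)
        (mul_nonneg hl.le (by nlinarith : (0 : ℝ) ≤ κ ^ 2 - 1))]
    nlinarith [hle, hge, hM2, hl]
end

section
/- Let ρ : ℕ → ℝ be increasing with ρ ∈ L²(μ) for the reversible measure μ of a birth–death process, and let g satisfy μ(g)=0 and sup_k |g(k+1)−g(k)|/(ρ(k+1)−ρ(k)) = 1. Then for every k ≥ 0: ∑_{i≥k} μ_i g(i) ≤ ∑_{i≥k} μ_i (ρ(i) − μ(ρ)). -/
/-- Tail-sum comparison lemma (Liu–Ma): let `μ` be the normalized reversible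
invariant probability of a positive recurrent birth–death chain on ℕ, let
`ρ : ℕ → ℝ` be increasing with `ρ ∈ L²(μ)`, and let `g` satisfy `μ(g) = 0`
and `sup_k |g(k+1)-g(k)|/(ρ(k+1)-ρ(k)) = 1`. Then for every `k ≥ 0`:
`∑_{i≥k} μ_i g(i) ≤ ∑_{i≥k} μ_i (ρ(i) - μ(ρ))`. -/
theorem birth_death_tail_sum_comparison
    (b a : ℕ → ℝ) (hb : ∀ k, 0 < b k) (ha : ∀ k, 1 ≤ k → 0 < a k)
    (π : ℕ → ℝ) (hπ0 : π 0 = 1)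
    (hπ : ∀ n : ℕ, π (n + 1) = π n * b n / a (n + 1))
    (hπsum : Summable π)
    (μ : ℕ → ℝ) (hμ : ∀ n, μ n = π n / ∑' m : ℕ, π m)
    (ρ : ℕ → ℝ) (hρmono : StrictMono ρ)
    (hρ2 : Summable (fun n => μ n * ρ n ^ 2))
    (hρ1 : Summable (fun n => μ n * ρ n))
    (g : ℕ → ℝ) (hgsum : Summable (fun n => μ n * g n))
    (hgmean : ∑' n : ℕ, μ n * g n = 0)
    (hgLip : (⨆ k : ℕ, |g (k + 1) - g k| / (ρ (k + 1) - ρ k)) = 1) :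
    ∀ k : ℕ,
      (∑' i : ℕ, μ (i + k) * g (i + k))
        ≤ ∑' i : ℕ, μ (i + k) * (ρ (i + k) - ∑' n : ℕ, μ n * ρ n) := by
  intro k
  -- positivity of π
  have hπpos : ∀ n, 0 < π n := by
    intro n
    induction n with
    | zero => simp [hπ0]
    | succ m ih =>
        rw [hπ m]
        exact div_pos (mul_pos ih (hb m)) (ha (m + 1) (Nat.le_add_left 1 m))
  set Z := ∑' m : ℕ, π m with hZ
  have hZpos : 0 < Z := Summable.tsum_pos hπsum (fun n => (hπpos n).le) 0 (hπpos 0)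
  have hμpos : ∀ n, 0 < μ n := fun n => by
    rw [hμ n]; exact div_pos (hπpos n) hZpos
  have hμsum : Summable μ := by
    have := hπsum.div_const Z
    convert this using 1 <;> try rfl
    funext n; exact hμ n
  have hμtot : ∑' n : ℕ, μ n = 1 := by
    have : ∑' n : ℕ, μ n = (∑' n : ℕ, π n) / Z := by
      rw [← tsum_div_const]; exact tsum_congr fun n => hμ n
    rw [this, ← hZ, div_self hZpos.ne']
  -- Lipschitz: increments of g are dominated by those of ρ
  have hbdd : BddAbove (Set.range fun k : ℕ => |g (k + 1) - g k| / (ρ (k + 1) - ρ k)) := by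
    by_contra hc
    rw [Real.iSup_of_not_bddAbove hc] at hgLip
    norm_num at hgLip
  have hLip : ∀ k : ℕ, g (k + 1) - g k ≤ ρ (k + 1) - ρ k := by
    intro j
    have h1 : |g (j + 1) - g j| / (ρ (j + 1) - ρ j) ≤ 1 := by
      have := le_ciSup hbdd j
      rwa [hgLip] at this
    have hρpos : 0 < ρ (j + 1) - ρ j := sub_pos.mpr (hρmono (Nat.lt_succ_self j))
    have := (div_le_one hρpos).mp h1
    exact (abs_le.mp this).2
  set c := ∑' n : ℕ, μ n * ρ n with hc
  set h : ℕ → ℝ := fun n => g n - ρ n + c with hdefh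
  have hanti : Antitone h := by
    apply antitone_nat_of_succ_le
    intro n
    simp only [hdefh]
    have := hLip n
    linarith
  -- summability facts
  have Sρc : Summable (fun n => μ n * (ρ n - c)) := by
    have := hρ1.sub (hμsum.mul_right c)
    convert this using 1 <;> try rfl
    funext n; ring
  have Sh : Summable (fun n => μ n * h n) := by
    have := hgsum.sub Sρc
    convert this using 1 <;> try rfl
    funext n; simp only [hdefh]; ring
  have htot : ∑' n : ℕ, μ n * h n = 0 := by
    have h1 : ∑' n : ℕ, μ n * h n
        = (∑' n : ℕ, μ n * g n) - ∑' n : ℕ, μ n * (ρ n - c) := by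
      rw [← Summable.tsum_sub hgsum Sρc]
      exact tsum_congr fun n => by simp only [hdefh]; ring
    have h2 : ∑' n : ℕ, μ n * (ρ n - c)
        = (∑' n : ℕ, μ n * ρ n) - ∑' n : ℕ, μ n * c := by
      rw [← Summable.tsum_sub hρ1 (hμsum.mul_right c)]
      exact tsum_congr fun n => by ring
    have h3 : ∑' n : ℕ, μ n * c = c := by
      rw [tsum_mul_right, hμtot, one_mul]
    rw [h1, hgmean, h2, h3, ← hc]
    ring
  -- the tail sum of μ·h is ≤ 0
  have Sh_tail : Summable (fun i => μ (i + k) * h (i + k)) :=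
    ((summable_nat_add_iff k).mpr Sh)
  have tail_nonpos : ∑' i : ℕ, μ (i + k) * h (i + k) ≤ 0 := by
    rcases le_or_gt (h k) 0 with hk | hk
    · apply tsum_nonpos
      intro i
      have : h (i + k) ≤ 0 := le_trans (hanti (Nat.le_add_left k i)) hk
      exact mul_nonpos_of_nonneg_of_nonpos (hμpos _).le this
    · have hsplit := Summable.sum_add_tsum_nat_add (f := fun n => μ n * h n) k Sh
      have hhead : 0 ≤ ∑ i ∈ Finset.range k, μ i * h i := by
        apply Finset.sum_nonneg
        intro i hi
        have : 0 < h i := lt_of_lt_of_le hk (hanti (Finset.mem_range.mp hi).le)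
        exact (mul_pos (hμpos i) this).le
      rw [htot] at hsplit
      linarith
  -- conclude
  have key : ∑' i : ℕ, μ (i + k) * (ρ (i + k) - c)
      = (∑' i : ℕ, μ (i + k) * g (i + k)) - ∑' i : ℕ, μ (i + k) * h (i + k) := by
    have Sg_tail : Summable (fun i => μ (i + k) * g (i + k)) :=
      (summable_nat_add_iff k).mpr hgsum
    rw [← Summable.tsum_sub Sg_tail Sh_tail]
    exact tsum_congr fun i => by simp only [hdefh]; ring
  rw [key]
  linarith
end

section
/- For the M/M/∞ queue (b_k = λ, a_k = k, μ = Poisson(λ)): if g : ℕ → ℝ has Lipschitz seminorm ‖g‖_Lip = sup_n|g(n+1)−g(n)| ≤ 1, then G = (−ℒ)^{−1}g satisfies ‖G‖_Lip ≤ 1, and its carré-du-champ Γ(G)(n) = ½(λ(G(n+1)−G(n))² + n(G(n−1)−G(n))²) satisfies Γ(G)(n) ≤ (λ+n)/2. -/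
set_option maxHeartbeats 1000000


open ProbabilityTheory

section Aux

variable (lam : NNReal)

/-- Recurrence for the Poisson pmf: `(n+1) μ(n+1) = λ μ(n)`. -/
lemma poisson_rec (n : ℕ) :
    poissonPMFReal lam (n + 1) * ((n : ℝ) + 1) = (lam : ℝ) * poissonPMFReal lam n := by
  simp only [poissonPMFReal, Nat.factorial_succ, pow_succ]
  push_cast
  have h1 : ((n : ℝ) + 1) ≠ 0 := by positivity
  have h2 : (Nat.factorial n : ℝ) ≠ 0 := by positivity
  field_simp

lemma poisson_summable : Summable (fun n => poissonPMFReal lam n) :=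
  (poissonPMFRealSum lam).summable

lemma poisson_tsum : ∑' n, poissonPMFReal lam n = 1 :=
  (poissonPMFRealSum lam).tsum_eq

/-- Summability of the first moment. -/
lemma poisson_moment_summable : Summable (fun n => poissonPMFReal lam n * (n : ℝ)) := by
  rw [← summable_nat_add_iff 1]
  have h : (fun n : ℕ => poissonPMFReal lam (n + 1) * ((n + 1 : ℕ) : ℝ)) =
      fun n => (lam : ℝ) * poissonPMFReal lam n := by
    funext n
    push_cast
    exact poisson_rec lam n
  rw [h]
  exact (poisson_summable lam).mul_left _

end Aux

/-- Lipschitz telescoping: `|g b - g a| ≤ b - a` for `a ≤ b`. -/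
lemma lip_telescope (g : ℕ → ℝ) (hgLip : ∀ n : ℕ, |g (n + 1) - g n| ≤ 1)
    {a b : ℕ} (hab : a ≤ b) : |g b - g a| ≤ (b : ℝ) - (a : ℝ) := by
  induction b with
  | zero => simp_all
  | succ b ih =>
    rcases Nat.eq_or_lt_of_le hab with h | h
    · subst h; simp
    · have hab' : a ≤ b := Nat.lt_succ_iff.mp h
      have h2 := hgLip b
      have h3 : |g (b + 1) - g a| ≤ ((b : ℝ) - a) + 1 := by
        calc |g (b + 1) - g a| = |(g (b + 1) - g b) + (g b - g a)| := by ring_nf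
          _ ≤ |g (b + 1) - g b| + |g b - g a| := abs_add_le _ _
          _ ≤ 1 + ((b : ℝ) - a) := add_le_add h2 (ih hab')
          _ = ((b : ℝ) - a) + 1 := by ring
      push_cast
      linarith

/-- M/M/∞ queue (`b_k = λ`, `a_k = k`, `μ = Poisson(λ)`): if `g : ℕ → ℝ` has
Lipschitz seminorm `sup_n |g(n+1)-g(n)| ≤ 1`, then the solution
`G = (-ℒ)⁻¹ g` of the Poisson equation (the mean-zero `L²(μ)` solution of
`-ℒG = g`, where `ℒf(n) = λ(f(n+1)-f(n)) + n(f(n-1)-f(n))`) satisfies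
`‖G‖_Lip ≤ 1`, and its carré-du-champ
`Γ(G)(n) = ½(λ(G(n+1)-G(n))² + n(G(n-1)-G(n))²)` satisfies
`Γ(G)(n) ≤ (λ+n)/2`. -/
theorem mmInf_poisson_solution_lipschitz
    (lam : NNReal) (hlam : 0 < lam)
    (g : ℕ → ℝ) (hgLip : ∀ n : ℕ, |g (n + 1) - g n| ≤ 1)
    (hgsum : Summable (fun n => poissonPMFReal lam n * g n))
    (hgmean : ∑' n : ℕ, poissonPMFReal lam n * g n = 0)
    (G : ℕ → ℝ)
    (hGsol : ∀ n : ℕ,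
      (lam : ℝ) * (G (n + 1) - G n) + (n : ℝ) * (G (n - 1) - G n) = -g n)
    (hGL2 : Summable (fun n => poissonPMFReal lam n * G n ^ 2))
    (hGmean : ∑' n : ℕ, poissonPMFReal lam n * G n = 0) :
    (∀ n : ℕ, |G (n + 1) - G n| ≤ 1) ∧
    (∀ n : ℕ,
      (1 / 2) * ((lam : ℝ) * (G (n + 1) - G n) ^ 2
          + (n : ℝ) * (G (n - 1) - G n) ^ 2)
        ≤ ((lam : ℝ) + (n : ℝ)) / 2) := by
  set μ : ℕ → ℝ := poissonPMFReal lam with hμ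
  have hμpos : ∀ k, 0 < μ k := fun k => poissonPMFReal_pos hlam
  have hμsum : Summable μ := poisson_summable lam
  have hμmom : Summable (fun k => μ k * (k : ℝ)) := poisson_moment_summable lam
  have hrec : ∀ k : ℕ, μ (k + 1) * ((k : ℝ) + 1) = (lam : ℝ) * μ k := poisson_rec lam
  have hlamR : (0 : ℝ) < (lam : ℝ) := by exact_mod_cast hlam
  -- Step 1: λ μ(n) (G(n+1)-G(n)) = - ∑_{k ≤ n} μ(k) g(k)
  have hS : ∀ n : ℕ, (lam : ℝ) * μ n * (G (n + 1) - G n)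
      = -(∑ k ∈ Finset.range (n + 1), μ k * g k) := by
    intro n
    induction n with
    | zero =>
      have h0 := hGsol 0
      simp only [Nat.cast_zero, zero_mul, add_zero] at h0
      simp only [Nat.zero_add, Finset.sum_range_one]
      norm_num at h0 ⊢
      linear_combination μ 0 * h0
    | succ n ih =>
      have h1 := hGsol (n + 1)
      have hsub : (n + 1) - 1 = n := rfl
      rw [hsub] at h1
      push_cast at h1
      have key : (lam : ℝ) * μ (n + 1) * (G (n + 1 + 1) - G (n + 1))
          = -(μ (n + 1) * g (n + 1)) + μ (n + 1) * ((n : ℝ) + 1) * (G (n + 1) - G n) := by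
        linear_combination μ (n + 1) * h1
      rw [Finset.sum_range_succ]
      have h2 : μ (n + 1) * ((n : ℝ) + 1) * (G (n + 1) - G n)
          = (lam : ℝ) * μ n * (G (n + 1) - G n) := by
        rw [hrec n]
      rw [key, h2, ih]
      ring
  -- tail summabilities
  have htail_g : ∀ n : ℕ, Summable (fun k => μ (k + n) * g (k + n)) :=
    fun n => (summable_nat_add_iff n).mpr hgsum
  have htail_μ : ∀ n : ℕ, Summable (fun k => μ (k + n)) :=
    fun n => (summable_nat_add_iff n).mpr hμsum
  have htail_mom : ∀ n : ℕ, Summable (fun k => μ (k + n) * ((k + n : ℕ) : ℝ)) :=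
    fun n => (summable_nat_add_iff n).mpr hμmom
  -- notations
  set F : ℕ → ℝ := fun n => ∑ k ∈ Finset.range (n + 1), μ k with hF
  set M : ℕ → ℝ := fun n => ∑' k, μ (k + (n + 1)) with hM
  set T : ℕ → ℝ := fun n => ∑' k, μ (k + (n + 1)) * g (k + (n + 1)) with hT
  set K : ℕ → ℝ := fun n => ∑' k, μ (k + (n + 1)) * ((k + (n + 1) : ℕ) : ℝ) with hKdef
  have hFn : ∀ n : ℕ, F n = ∑ k ∈ Finset.range (n + 1), μ k := fun _ => rfl
  have hMn : ∀ n : ℕ, M n = ∑' k, μ (k + (n + 1)) := fun _ => rfl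
  have hTn : ∀ n : ℕ, T n = ∑' k, μ (k + (n + 1)) * g (k + (n + 1)) := fun _ => rfl
  have hKn : ∀ n : ℕ, K n = ∑' k, μ (k + (n + 1)) * ((k + (n + 1) : ℕ) : ℝ) := fun _ => rfl
  -- S(n) = -T(n)
  have hST : ∀ n : ℕ, (∑ k ∈ Finset.range (n + 1), μ k * g k) = -T n := by
    intro n
    have h := Summable.sum_add_tsum_nat_add (n + 1) hgsum
    rw [hgmean] at h
    rw [hTn n]
    linarith [h]
  have hFM : ∀ n, F n + M n = 1 := by
    intro n
    have h := Summable.sum_add_tsum_nat_add (n + 1) hμsum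
    rw [poisson_tsum] at h
    rw [hFn n, hMn n]
    linarith [h]
  have hMnonneg : ∀ n, 0 ≤ M n := fun n => tsum_nonneg (fun k => (hμpos _).le)
  -- tail moment identity: K n = λ (μ n + M n)
  have hK : ∀ n : ℕ, K n = (lam : ℝ) * (μ n + M n) := by
    intro n
    have h1 : ∀ k : ℕ, μ (k + (n + 1)) * ((k + (n + 1) : ℕ) : ℝ)
        = (lam : ℝ) * μ (k + n) := by
      intro k
      have he : k + (n + 1) = (k + n) + 1 := by ring
      rw [he]
      have := hrec (k + n)
      push_cast at this ⊢
      linarith [this]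
    have h2 : (∑' k, μ (k + n)) = μ n + M n := by
      rw [Summable.tsum_eq_zero_add (htail_μ n), hMn n]
      congr 1
      · norm_num
      · apply tsum_congr
        intro k
        congr 1
        omega
    rw [hKn n, tsum_congr h1, tsum_mul_left, h2]
  -- first-moment finite sum: ∑_{m ≤ n} μ m * m = λ (F n - μ n)
  have hE : ∀ n : ℕ, (∑ m ∈ Finset.range (n + 1), μ m * (m : ℝ))
      = (lam : ℝ) * (F n - μ n) := by
    intro n
    rw [Finset.sum_range_succ']
    simp only [Nat.cast_zero, mul_zero, add_zero]
    have h1 : ∀ i ∈ Finset.range n, μ (i + 1) * ((i + 1 : ℕ) : ℝ) = (lam : ℝ) * μ i := by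
      intro i _
      push_cast
      exact hrec i
    rw [Finset.sum_congr rfl h1, ← Finset.mul_sum]
    congr 1
    rw [hFn n, Finset.sum_range_succ]
    ring
  -- Step 3: |T n| ≤ λ μ n
  have hTbound : ∀ n : ℕ, |T n| ≤ (lam : ℝ) * μ n := by
    intro n
    have hinner : ∀ m : ℕ, (∑' k, μ (k + (n + 1)) * (g (k + (n + 1)) - g m))
        = T n - g m * M n := by
      intro m
      have hs1 := htail_g (n + 1)
      have hs2 := (htail_μ (n + 1)).mul_right (g m)
      calc (∑' k, μ (k + (n + 1)) * (g (k + (n + 1)) - g m))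
          = ∑' k, (μ (k + (n + 1)) * g (k + (n + 1)) - μ (k + (n + 1)) * g m) := by
            apply tsum_congr; intro k; ring
        _ = (∑' k, μ (k + (n + 1)) * g (k + (n + 1))) - ∑' k, μ (k + (n + 1)) * g m :=
            Summable.tsum_sub hs1 hs2
        _ = T n - g m * M n := by
            rw [hTn n, hMn n, tsum_mul_right]; ring
    have hrep : T n = ∑ m ∈ Finset.range (n + 1),
        μ m * (∑' k, μ (k + (n + 1)) * (g (k + (n + 1)) - g m)) := by
      have hc : ∀ m ∈ Finset.range (n + 1),
          μ m * (∑' k, μ (k + (n + 1)) * (g (k + (n + 1)) - g m))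
          = μ m * T n - μ m * g m * M n := by
        intro m _
        rw [hinner m]; ring
      rw [Finset.sum_congr rfl hc, Finset.sum_sub_distrib, ← Finset.sum_mul]
      have hmul : ∀ m ∈ Finset.range (n + 1), μ m * g m * M n = (μ m * g m) * M n :=
        fun m _ => rfl
      rw [Finset.sum_congr rfl hmul, ← Finset.sum_mul, hST n, ← hFn n]
      have h := hFM n
      linear_combination (-(T n)) * h
    -- bound each inner sum
    have hinner_bound : ∀ m : ℕ, m ≤ n →
        |∑' k, μ (k + (n + 1)) * (g (k + (n + 1)) - g m)|
        ≤ K n - (m : ℝ) * M n := by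
      intro m hm
      have hbnd_summ : Summable (fun k => μ (k + (n + 1)) * (((k + (n + 1) : ℕ) : ℝ) - m)) := by
        have h := (htail_mom (n + 1)).sub ((htail_μ (n + 1)).mul_right (m : ℝ))
        apply h.congr
        intro k
        ring
      have hptwise : ∀ k : ℕ, |μ (k + (n + 1)) * (g (k + (n + 1)) - g m)|
          ≤ μ (k + (n + 1)) * (((k + (n + 1) : ℕ) : ℝ) - m) := by
        intro k
        rw [abs_mul, abs_of_pos (hμpos _)]
        apply mul_le_mul_of_nonneg_left _ (hμpos _).le
        have hle : m ≤ k + (n + 1) := by omega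
        exact lip_telescope g hgLip hle
      have habs_summ : Summable (fun k => |μ (k + (n + 1)) * (g (k + (n + 1)) - g m)|) :=
        Summable.of_nonneg_of_le (fun k => abs_nonneg _) hptwise hbnd_summ
      calc |∑' k, μ (k + (n + 1)) * (g (k + (n + 1)) - g m)|
          ≤ ∑' k, |μ (k + (n + 1)) * (g (k + (n + 1)) - g m)| := by
            have h := norm_tsum_le_tsum_norm
              (f := fun k => μ (k + (n + 1)) * (g (k + (n + 1)) - g m))
              (by simpa only [Real.norm_eq_abs] using habs_summ)
            simpa only [Real.norm_eq_abs] using h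
        _ ≤ ∑' k, μ (k + (n + 1)) * (((k + (n + 1) : ℕ) : ℝ) - m) :=
            Summable.tsum_le_tsum hptwise habs_summ hbnd_summ
        _ = K n - (m : ℝ) * M n := by
            have : (∑' k, (μ (k + (n + 1)) * ((k + (n + 1) : ℕ) : ℝ)
                - μ (k + (n + 1)) * m)) = K n - (m : ℝ) * M n := by
              rw [Summable.tsum_sub (htail_mom (n + 1)) ((htail_μ (n + 1)).mul_right (m : ℝ)),
                hKn n, hMn n, tsum_mul_right]
              ring
            rw [← this]
            apply tsum_congr; intro k; ring
    -- combine
    calc |T n| ≤ ∑ m ∈ Finset.range (n + 1), |μ m * (∑' k, μ (k + (n + 1)) *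
          (g (k + (n + 1)) - g m))| := by
          rw [hrep]; exact Finset.abs_sum_le_sum_abs _ _
      _ ≤ ∑ m ∈ Finset.range (n + 1), μ m * (K n - (m : ℝ) * M n) := by
          apply Finset.sum_le_sum
          intro m hm
          rw [abs_mul, abs_of_pos (hμpos m)]
          exact mul_le_mul_of_nonneg_left
            (hinner_bound m (Nat.lt_succ_iff.mp (Finset.mem_range.mp hm))) (hμpos m).le
      _ = F n * K n - (∑ m ∈ Finset.range (n + 1), μ m * (m : ℝ)) * M n := by
          rw [Finset.sum_congr rfl (fun m _ => by ring :
            ∀ m ∈ Finset.range (n + 1), μ m * (K n - (m : ℝ) * M n)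
              = μ m * K n - μ m * (m : ℝ) * M n)]
          rw [Finset.sum_sub_distrib, ← Finset.sum_mul, ← Finset.sum_mul, ← hFn n]
      _ = (lam : ℝ) * μ n := by
          rw [hK n, hE n]
          have h := hFM n
          linear_combination ((lam : ℝ) * μ n) * h
  -- Step 4: Lipschitz bound
  have hLip : ∀ n : ℕ, |G (n + 1) - G n| ≤ 1 := by
    intro n
    have h1 : (lam : ℝ) * μ n * (G (n + 1) - G n) = T n := by
      rw [hS n, hST n]; ring
    have h2 : (lam : ℝ) * μ n * |G (n + 1) - G n| ≤ (lam : ℝ) * μ n := by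
      have := hTbound n
      rw [← h1, abs_mul, abs_of_pos (mul_pos hlamR (hμpos n))] at this
      linarith
    have hpos : (0 : ℝ) < (lam : ℝ) * μ n := mul_pos hlamR (hμpos n)
    nlinarith [h2, hpos]
  refine ⟨hLip, fun n => ?_⟩
  have h1 : (G (n + 1) - G n) ^ 2 ≤ 1 := by
    have := hLip n
    nlinarith [abs_nonneg (G (n + 1) - G n), sq_abs (G (n + 1) - G n)]
  cases n with
  | zero => simp; nlinarith [h1]
  | succ m =>
    have hsub : (m + 1) - 1 = m := rfl
    rw [hsub]
    have h2 : (G m - G (m + 1)) ^ 2 ≤ 1 := by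
      have := hLip m
      nlinarith [abs_nonneg (G (m + 1) - G m), sq_abs (G (m + 1) - G m)]
    push_cast
    nlinarith [h1, h2, Nat.cast_nonneg (α := ℝ) m]
end
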